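/- For all a, b ∈ R^n with n ≥ 2, the inequalities dist(a,b) ≤ d_△(a,b) ≤ (n-1)·dist(a,b) hold. -/
import Mathlib


noncomputable def tmin {n : ℕ} [NeZero n] (f : Fin n → ℝ) : ℝ :=
  Finset.univ.inf' Finset.univ_nonempty f

noncomputable def tmax {n : ℕ} [NeZero n] (f : Fin n → ℝ) : ℝ :=
  Finset.univ.sup' Finset.univ_nonempty f

noncomputable def dtri {n : ℕ} [NeZero n] (a b : Fin n → ℝ) : ℝ :=
  (∑ i, (b i - a i)) - n * tmin (fun i => b i - a i)

noncomputable def tdist {n : ℕ} [NeZero n] (a b : Fin n → ℝ) : ℝ :=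
  tmax (fun i => a i - b i) - tmin (fun j => a j - b j)

theorem stmt4 {n : ℕ} [NeZero n] (hn : 2 ≤ n) (a b : Fin n → ℝ) :
    tdist a b ≤ dtri a b ∧ dtri a b ≤ ((n : ℝ) - 1) * tdist a b := by
  set c : Fin n → ℝ := fun i => b i - a i with hc
  have hneg : (fun i => a i - b i) = fun i => -(c i) := by
    funext i; simp [hc]
  -- argmin and argmax of c
  obtain ⟨k, -, hk⟩ := Finset.exists_mem_eq_inf' (Finset.univ_nonempty (α := Fin n)) c
  obtain ⟨j, -, hj⟩ := Finset.exists_mem_eq_sup' (Finset.univ_nonempty (α := Fin n)) c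
  have hmin_le : ∀ i, tmin c ≤ c i := fun i => Finset.inf'_le _ (Finset.mem_univ i)
  have hle_max : ∀ i, c i ≤ tmax c := fun i => Finset.le_sup' _ (Finset.mem_univ i)
  have hmax : tmax (fun i => a i - b i) = - tmin c := by
    rw [hneg]
    apply le_antisymm
    · apply Finset.sup'_le
      intro i _
      exact neg_le_neg (hmin_le i)
    · rw [tmin, hk]
      exact Finset.le_sup' (fun i => -(c i)) (Finset.mem_univ k)
  have hminneg : tmin (fun j => a j - b j) = - tmax c := by
    rw [hneg]
    apply le_antisymm
    · rw [tmax, hj]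
      exact Finset.inf'_le (fun i => -(c i)) (Finset.mem_univ j)
    · apply Finset.le_inf'
      intro i _
      exact neg_le_neg (hle_max i)
  have htd : tdist a b = tmax c - tmin c := by
    rw [tdist, hmax, hminneg]; ring
  have hdt : dtri a b = ∑ i, (c i - tmin c) := by
    simp only [dtri, show ∀ i, b i - a i = c i from fun i => rfl,
      Finset.sum_sub_distrib, Finset.sum_const, Finset.card_univ,
      Fintype.card_fin, nsmul_eq_mul]
  have hnn : ∀ i, 0 ≤ c i - tmin c := fun i => sub_nonneg.2 (hmin_le i)
  constructor
  · rw [htd, hdt]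
    calc tmax c - tmin c = c j - tmin c := by rw [tmax, hj]
    _ ≤ ∑ i, (c i - tmin c) :=
        Finset.single_le_sum (fun i _ => hnn i) (Finset.mem_univ j)
  · rw [htd, hdt]
    have hsplit : ∑ i, (c i - tmin c) = ∑ i ∈ Finset.univ.erase k, (c i - tmin c) := by
      rw [Finset.sum_erase]
      rw [tmin, hk]; ring_nf
    rw [hsplit]
    calc ∑ i ∈ Finset.univ.erase k, (c i - tmin c)
        ≤ ∑ _i ∈ Finset.univ.erase k, (tmax c - tmin c) := by
          apply Finset.sum_le_sum
          intro i _
          exact sub_le_sub_right (hle_max i) _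
    _ = ((n : ℝ) - 1) * (tmax c - tmin c) := by
          rw [Finset.sum_const, Finset.card_erase_of_mem (Finset.mem_univ k),
            Finset.card_univ, Fintype.card_fin, nsmul_eq_mul]
          have : 1 ≤ n := le_trans (by norm_num) hn
          push_cast [this]
          ring
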